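/- Let $\nu>0$, $\lambda\in\mathbb{R}$, $m\in\mathbb{R}$, and define $\theta(x,t)=\frac{\sqrt{\nu}}{\sqrt{2(t+1)}}\left(e^{m/\nu}-1\right)e^{-\frac{(x-\lambda(t+1))^2}{2\nu(t+1)}}\left[\sqrt{\pi}+\left(e^{m/\nu}-1\right)\int_{\frac{x-\lambda(t+1)}{\sqrt{2\nu(t+1)}}}^{\infty}e^{-y^2}dy\right]^{-1}$. Then $\theta$ satisfies the Burgers equation with convection: $\partial_t\theta+\lambda\partial_x\theta+\partial_x(\theta^2/2)=\frac{\nu}{2}\partial_x^2\theta$ for all $x\in\mathbb{R}$, $t>0$. -/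

import Mathlib

open Real MeasureTheory

noncomputable def gA (u : ℝ) : ℝ := Real.exp (-u^2)
noncomputable def FA (z : ℝ) : ℝ := ∫ y in Set.Ioi z, Real.exp (-y^2)

lemma hasDerivAt_gA (u : ℝ) : HasDerivAt gA ((-2)*u*gA u) u := by
  have h : HasDerivAt (fun v : ℝ => -v^2) (-(2*u)) u := by
    simpa using (hasDerivAt_pow 2 u).fun_neg
  exact h.exp.congr_deriv (by unfold gA; ring)

lemma integrable_g : Integrable (fun y : ℝ => Real.exp (-y^2)) := by
  simpa using integrable_exp_neg_mul_sq (one_pos)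

lemma FA_eq (z : ℝ) : FA z = ((∫ y : ℝ, Real.exp (-y^2)) - ∫ y in Set.Iic 0, Real.exp (-y^2))
    - ∫ y in (0:ℝ)..z, Real.exp (-y^2) := by
  have h1 := MeasureTheory.integral_add_compl (measurableSet_Iic (a := z)) integrable_g
  rw [Set.compl_Iic] at h1
  have h2 := intervalIntegral.integral_Iic_sub_Iic (integrable_g.integrableOn (s := Set.Iic 0))
    (integrable_g.integrableOn (s := Set.Iic z))
  unfold FA; linarith

lemma hasDerivAt_FA (z : ℝ) : HasDerivAt FA (-(gA z)) z := by
  have h : HasDerivAt (fun z => ∫ y in (0:ℝ)..z, Real.exp (-y^2)) (Real.exp (-z^2)) z :=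
    intervalIntegral.integral_hasDerivAt_right
      (Continuous.intervalIntegrable (by continuity) _ _)
      (Continuous.stronglyMeasurableAtFilter (by continuity) _ _)
      (Continuous.continuousAt (by continuity))
  have h2 := h.const_sub ((∫ y : ℝ, Real.exp (-y^2)) - ∫ y in Set.Iic 0, Real.exp (-y^2))
  rw [show FA = fun z => ((∫ y : ℝ, Real.exp (-y^2)) - ∫ y in Set.Iic 0, Real.exp (-y^2))
      - ∫ y in (0:ℝ)..z, Real.exp (-y^2) from funext FA_eq, gA]
  exact h2

section xlemmas
variable (P k a c : ℝ)

lemma hZd (y : ℝ) : HasDerivAt (fun y : ℝ => (y - a) * c) c y := by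
  simpa using ((hasDerivAt_id y).sub_const a).mul_const c

lemma hgd (y : ℝ) : HasDerivAt (fun y : ℝ => gA ((y - a) * c))
    ((-2)*((y-a)*c)*gA ((y-a)*c)*c) y := by
  refine ((hasDerivAt_gA ((y-a)*c)).comp y (hZd a c y)).congr_deriv ?_; ring

lemma hDd (y : ℝ) : HasDerivAt (fun y : ℝ => Real.sqrt π + k * FA ((y - a) * c))
    (-(k * gA ((y-a)*c) * c)) y := by
  refine ((((hasDerivAt_FA ((y-a)*c)).comp y (hZd a c y)).const_mul k).const_add
    (Real.sqrt π)).congr_deriv ?_; ring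

lemma xderiv1 (hD0 : ∀ y : ℝ, Real.sqrt π + k * FA ((y - a) * c) ≠ 0) (y : ℝ) :
    HasDerivAt (fun y => P * gA ((y - a) * c) * (Real.sqrt π + k * FA ((y - a) * c))⁻¹)
      (P * c * ((-2)*((y-a)*c) * gA ((y-a)*c) * (Real.sqrt π + k * FA ((y-a)*c))
          + k * gA ((y-a)*c)^2)
        / (Real.sqrt π + k * FA ((y-a)*c))^2) y := by
  have h := ((hgd a c y).const_mul P).mul ((hDd k a c y).inv (hD0 y))
  exact h.congr_deriv (by simp only [Pi.inv_apply]; field_simp [hD0 y])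

lemma xderiv2 (hD0 : ∀ y : ℝ, Real.sqrt π + k * FA ((y - a) * c) ≠ 0) (y : ℝ) :
    HasDerivAt (fun y => P * c * ((-2)*((y-a)*c) * gA ((y-a)*c) * (Real.sqrt π + k * FA ((y-a)*c))
          + k * gA ((y-a)*c)^2)
        / (Real.sqrt π + k * FA ((y-a)*c))^2)
      (P * c^2 * ((4*((y-a)*c)^2 - 2) * gA ((y-a)*c) * (Real.sqrt π + k * FA ((y-a)*c))^2
          - 6*k*((y-a)*c) * gA ((y-a)*c)^2 * (Real.sqrt π + k * FA ((y-a)*c))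
          + 2*k^2 * gA ((y-a)*c)^3)
        / (Real.sqrt π + k * FA ((y-a)*c))^3) y := by
  have hnum := ((((hZd a c y).const_mul (-2)).mul (hgd a c y)).mul (hDd k a c y)).add
      (((hgd a c y).pow 2).const_mul k)
  have h := (hnum.const_mul (P * c)).div ((hDd k a c y).pow 2)
      (pow_ne_zero 2 (hD0 y))
  refine h.congr_deriv ?_
  simp only [Pi.mul_apply, Pi.add_apply, Pi.pow_apply, Nat.cast_ofNat]
  norm_num
  field_simp [hD0 y]
  ring
end xlemmas

lemma xderivsq (P k a c : ℝ)
    (hD0 : ∀ y : ℝ, Real.sqrt π + k * FA ((y - a) * c) ≠ 0) (y : ℝ) :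
    HasDerivAt (fun y => (P * gA ((y - a) * c) * (Real.sqrt π + k * FA ((y - a) * c))⁻¹)^2 / 2)
      ((P * gA ((y - a) * c) * (Real.sqrt π + k * FA ((y - a) * c))⁻¹) *
        (P * c * ((-2)*((y-a)*c) * gA ((y-a)*c) * (Real.sqrt π + k * FA ((y-a)*c))
            + k * gA ((y-a)*c)^2)
          / (Real.sqrt π + k * FA ((y-a)*c))^2)) y := by
  have h := ((xderiv1 P k a c hD0 y).pow 2).div_const 2
  refine h.congr_deriv ?_
  norm_num
  ring

lemma tderiv (ν lam k x t : ℝ) (hν : 0 < ν) (ht : 0 < t)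
    (hD0 : Real.sqrt π + k * FA ((x - lam*(t+1)) * (Real.sqrt (2*ν*(t+1)))⁻¹) ≠ 0) :
    HasDerivAt (fun s => Real.sqrt ν / Real.sqrt (2*(s+1)) * k *
        gA ((x - lam*(s+1)) * (Real.sqrt (2*ν*(s+1)))⁻¹) *
        (Real.sqrt π + k * FA ((x - lam*(s+1)) * (Real.sqrt (2*ν*(s+1)))⁻¹))⁻¹)
      (Real.sqrt ν / Real.sqrt (2*(t+1)) * k *
        gA ((x - lam*(t+1)) * (Real.sqrt (2*ν*(t+1)))⁻¹) *
        (-((Real.sqrt π + k * FA ((x - lam*(t+1)) * (Real.sqrt (2*ν*(t+1)))⁻¹)) / (2*(t+1)))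
          + (-lam * (Real.sqrt (2*ν*(t+1)))⁻¹
              - ((x - lam*(t+1)) * (Real.sqrt (2*ν*(t+1)))⁻¹) / (2*(t+1))) *
            ((-2) * ((x - lam*(t+1)) * (Real.sqrt (2*ν*(t+1)))⁻¹)
                * (Real.sqrt π + k * FA ((x - lam*(t+1)) * (Real.sqrt (2*ν*(t+1)))⁻¹))
              + k * gA ((x - lam*(t+1)) * (Real.sqrt (2*ν*(t+1)))⁻¹)))
        / (Real.sqrt π + k * FA ((x - lam*(t+1)) * (Real.sqrt (2*ν*(t+1)))⁻¹))^2) t := by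
  have h2τ : (0:ℝ) < 2*(t+1) := by linarith
  have h2ντ : (0:ℝ) < 2*ν*(t+1) := by positivity
  have hs2pos : 0 < Real.sqrt (2*(t+1)) := Real.sqrt_pos.mpr h2τ
  have hsqpos : 0 < Real.sqrt (2*ν*(t+1)) := Real.sqrt_pos.mpr h2ντ
  -- inner derivatives
  have hlin : HasDerivAt (fun s : ℝ => 2*(s+1)) 2 t := by
    simpa using ((hasDerivAt_id t).add_const 1).const_mul 2
  have hlin2 : HasDerivAt (fun s : ℝ => 2*ν*(s+1)) (2*ν) t := by
    simpa using ((hasDerivAt_id t).add_const 1).const_mul (2*ν)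
  have hs2 : HasDerivAt (fun s : ℝ => Real.sqrt (2*(s+1))) (1/(2*Real.sqrt (2*(t+1))) * 2) t :=
    (Real.hasDerivAt_sqrt (ne_of_gt h2τ)).comp t hlin
  have hsq : HasDerivAt (fun s : ℝ => Real.sqrt (2*ν*(s+1))) (1/(2*Real.sqrt (2*ν*(t+1))) * (2*ν)) t :=
    (Real.hasDerivAt_sqrt (ne_of_gt h2ντ)).comp t hlin2
  have hA : HasDerivAt (fun s : ℝ => Real.sqrt ν / Real.sqrt (2*(s+1)))
      ((0 * Real.sqrt (2*(t+1)) - Real.sqrt ν * (1/(2*Real.sqrt (2*(t+1))) * 2)) / (Real.sqrt (2*(t+1)))^2) t :=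
    (hasDerivAt_const t (Real.sqrt ν)).div hs2 (ne_of_gt hs2pos)
  have hw : HasDerivAt (fun s : ℝ => x - lam*(s+1)) (-(lam*1)) t := by
    exact (((hasDerivAt_id t).add_const 1).const_mul lam).const_sub x
  have hZ := hw.mul (hsq.inv (ne_of_gt hsqpos))
  have hg := (hasDerivAt_gA _).comp t hZ
  have hF := (hasDerivAt_FA _).comp t hZ
  have hD := (hF.const_mul k).const_add (Real.sqrt π)
  have hDinv := hD.inv hD0
  have H := ((hA.mul_const k).mul hg).mul hDinv
  refine H.congr_deriv ?_
  have e1 : Real.sqrt (2*ν*(t+1)) = Real.sqrt ν * Real.sqrt (2*(t+1)) := by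
    rw [show 2*ν*(t+1) = ν*(2*(t+1)) by ring, Real.sqrt_mul hν.le]
  rw [e1] at hD0
  simp only [Function.comp_apply, Pi.mul_apply, Pi.inv_apply, e1]
  set sν := Real.sqrt ν with hsν
  set s2 := Real.sqrt (2*(t+1)) with hs2'
  have eν : ν = sν^2 := by rw [hsν, Real.sq_sqrt hν.le]
  have e2 : 2*(t+1) = s2^2 := by rw [hs2', Real.sq_sqrt h2τ.le]
  have hsν0 : sν ≠ 0 := ne_of_gt (hsν ▸ Real.sqrt_pos.mpr hν)
  have hs20 : s2 ≠ 0 := ne_of_gt (hs2' ▸ hs2pos)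
  simp only [eν, e2]
  set w := x - lam*(t+1) with hw'
  set G := gA (w * (sν*s2)⁻¹) with hG
  set Fv := FA (w * (sν*s2)⁻¹) with hFv
  field_simp [hD0, hsν0, hs20]
  ring


theorem cole_hopf_solves_burgers (ν lam m : ℝ) (hν : 0 < ν)
    (θ : ℝ → ℝ → ℝ)
    (hθ : ∀ x t, θ x t =
      (Real.sqrt ν / Real.sqrt (2*(t+1))) * (Real.exp (m/ν) - 1) *
        Real.exp (-(x - lam*(t+1))^2 / (2*ν*(t+1))) *
        (Real.sqrt π + (Real.exp (m/ν) - 1) *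
          ∫ y in Set.Ioi ((x - lam*(t+1)) / Real.sqrt (2*ν*(t+1))), Real.exp (-y^2))⁻¹)
    (hden : ∀ x t, 0 < t →
      Real.sqrt π + (Real.exp (m/ν) - 1) *
        ∫ y in Set.Ioi ((x - lam*(t+1)) / Real.sqrt (2*ν*(t+1))), Real.exp (-y^2) ≠ 0) :
    ∀ x t, 0 < t →
      deriv (fun s => θ x s) t + lam * deriv (fun y => θ y t) x
        + deriv (fun y => (θ y t)^2 / 2) x
      = (ν/2) * deriv (deriv (fun y => θ y t)) x := by
  intro x t ht
  have hτ : (0:ℝ) < t + 1 := by linarith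
  have h2τ : (0:ℝ) < 2*(t+1) := by linarith
  have h2ντ : (0:ℝ) < 2*ν*(t+1) := by positivity
  set k := Real.exp (m/ν) - 1 with hk
  -- pointwise identification of θ with the smooth formula
  have hpt : ∀ (y s : ℝ), -1 < s → θ y s = Real.sqrt ν / Real.sqrt (2*(s+1)) * k * gA ((y - lam*(s+1)) * (Real.sqrt (2*ν*(s+1)))⁻¹) * (Real.sqrt π + k * FA ((y - lam*(s+1)) * (Real.sqrt (2*ν*(s+1)))⁻¹))⁻¹ := by
    intro y s hs
    have hs1 : (0:ℝ) ≤ s + 1 := by linarith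
    have h2νs : (0:ℝ) ≤ 2*ν*(s+1) := by positivity
    have hE : Real.exp (-(y - lam*(s+1))^2 / (2*ν*(s+1))) = gA ((y - lam*(s+1)) * (Real.sqrt (2*ν*(s+1)))⁻¹) := by
      simp only [gA]
      congr 1
      rw [mul_pow, inv_pow, Real.sq_sqrt h2νs]
      ring
    have hI : (∫ z in Set.Ioi ((y - lam*(s+1)) / Real.sqrt (2*ν*(s+1))), Real.exp (-z^2))
        = FA ((y - lam*(s+1)) * (Real.sqrt (2*ν*(s+1)))⁻¹) := by
      simp only [FA]
      rw [div_eq_mul_inv]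
    rw [hθ y s, hE, hI]
  have hD0x : ∀ y : ℝ, Real.sqrt π + k * FA ((y - lam*(t+1)) * (Real.sqrt (2*ν*(t+1)))⁻¹) ≠ 0 := by
    intro y
    have h := hden y t ht
    have hI : (∫ z in Set.Ioi ((y - lam*(t+1)) / Real.sqrt (2*ν*(t+1))), Real.exp (-z^2))
        = FA ((y - lam*(t+1)) * (Real.sqrt (2*ν*(t+1)))⁻¹) := by
      simp only [FA]
      rw [div_eq_mul_inv]
    rw [hI] at h
    exact h
  have hxfun : (fun y => θ y t) = (fun y => Real.sqrt ν / Real.sqrt (2*(t+1)) * k * gA ((y - lam*(t+1)) * (Real.sqrt (2*ν*(t+1)))⁻¹) * (Real.sqrt π + k * FA ((y - lam*(t+1)) * (Real.sqrt (2*ν*(t+1)))⁻¹))⁻¹) :=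
    funext fun y => hpt y t (by linarith)
  -- first spatial derivative
  have hd1 : deriv (fun y => θ y t) = (fun y => Real.sqrt ν / Real.sqrt (2*(t+1)) * k * (Real.sqrt (2*ν*(t+1)))⁻¹ * ((-2)*((y - lam*(t+1)) * (Real.sqrt (2*ν*(t+1)))⁻¹) * gA ((y - lam*(t+1)) * (Real.sqrt (2*ν*(t+1)))⁻¹) * (Real.sqrt π + k * FA ((y - lam*(t+1)) * (Real.sqrt (2*ν*(t+1)))⁻¹)) + k * gA ((y - lam*(t+1)) * (Real.sqrt (2*ν*(t+1)))⁻¹)^2) / (Real.sqrt π + k * FA ((y - lam*(t+1)) * (Real.sqrt (2*ν*(t+1)))⁻¹))^2) := by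
    funext y
    rw [hxfun]
    exact (xderiv1 (Real.sqrt ν / Real.sqrt (2*(t+1)) * k) k (lam*(t+1)) (Real.sqrt (2*ν*(t+1)))⁻¹ hD0x y).deriv
  have hd1x : deriv (fun y => θ y t) x = Real.sqrt ν / Real.sqrt (2*(t+1)) * k * (Real.sqrt (2*ν*(t+1)))⁻¹ * ((-2)*((x - lam*(t+1)) * (Real.sqrt (2*ν*(t+1)))⁻¹) * gA ((x - lam*(t+1)) * (Real.sqrt (2*ν*(t+1)))⁻¹) * (Real.sqrt π + k * FA ((x - lam*(t+1)) * (Real.sqrt (2*ν*(t+1)))⁻¹)) + k * gA ((x - lam*(t+1)) * (Real.sqrt (2*ν*(t+1)))⁻¹)^2) / (Real.sqrt π + k * FA ((x - lam*(t+1)) * (Real.sqrt (2*ν*(t+1)))⁻¹))^2 := by rw [hd1]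
  -- second spatial derivative
  have hdd : deriv (deriv (fun y => θ y t)) x = Real.sqrt ν / Real.sqrt (2*(t+1)) * k * (Real.sqrt (2*ν*(t+1)))⁻¹^2 * ((4*((x - lam*(t+1)) * (Real.sqrt (2*ν*(t+1)))⁻¹)^2 - 2) * gA ((x - lam*(t+1)) * (Real.sqrt (2*ν*(t+1)))⁻¹) * (Real.sqrt π + k * FA ((x - lam*(t+1)) * (Real.sqrt (2*ν*(t+1)))⁻¹))^2 - 6*k*((x - lam*(t+1)) * (Real.sqrt (2*ν*(t+1)))⁻¹) * gA ((x - lam*(t+1)) * (Real.sqrt (2*ν*(t+1)))⁻¹)^2 * (Real.sqrt π + k * FA ((x - lam*(t+1)) * (Real.sqrt (2*ν*(t+1)))⁻¹)) + 2*k^2 * gA ((x - lam*(t+1)) * (Real.sqrt (2*ν*(t+1)))⁻¹)^3) / (Real.sqrt π + k * FA ((x - lam*(t+1)) * (Real.sqrt (2*ν*(t+1)))⁻¹))^3 := by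
    rw [hd1]
    exact (xderiv2 (Real.sqrt ν / Real.sqrt (2*(t+1)) * k) k (lam*(t+1)) (Real.sqrt (2*ν*(t+1)))⁻¹ hD0x x).deriv
  -- derivative of the square term
  have hsqfun : (fun y => (θ y t)^2 / 2) = (fun y => (Real.sqrt ν / Real.sqrt (2*(t+1)) * k * gA ((y - lam*(t+1)) * (Real.sqrt (2*ν*(t+1)))⁻¹) * (Real.sqrt π + k * FA ((y - lam*(t+1)) * (Real.sqrt (2*ν*(t+1)))⁻¹))⁻¹)^2 / 2) :=
    funext fun y => by rw [hpt y t (by linarith)]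
  have hsqd : deriv (fun y => (θ y t)^2 / 2) x
      = (Real.sqrt ν / Real.sqrt (2*(t+1)) * k * gA ((x - lam*(t+1)) * (Real.sqrt (2*ν*(t+1)))⁻¹) * (Real.sqrt π + k * FA ((x - lam*(t+1)) * (Real.sqrt (2*ν*(t+1)))⁻¹))⁻¹) * (Real.sqrt ν / Real.sqrt (2*(t+1)) * k * (Real.sqrt (2*ν*(t+1)))⁻¹ * ((-2)*((x - lam*(t+1)) * (Real.sqrt (2*ν*(t+1)))⁻¹) * gA ((x - lam*(t+1)) * (Real.sqrt (2*ν*(t+1)))⁻¹) * (Real.sqrt π + k * FA ((x - lam*(t+1)) * (Real.sqrt (2*ν*(t+1)))⁻¹)) + k * gA ((x - lam*(t+1)) * (Real.sqrt (2*ν*(t+1)))⁻¹)^2) / (Real.sqrt π + k * FA ((x - lam*(t+1)) * (Real.sqrt (2*ν*(t+1)))⁻¹))^2) := by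
    rw [hsqfun]
    exact (xderivsq (Real.sqrt ν / Real.sqrt (2*(t+1)) * k) k (lam*(t+1)) (Real.sqrt (2*ν*(t+1)))⁻¹ hD0x x).deriv
  -- time derivative
  have hev : (fun s => θ x s) =ᶠ[nhds t] (fun s => Real.sqrt ν / Real.sqrt (2*(s+1)) * k * gA ((x - lam*(s+1)) * (Real.sqrt (2*ν*(s+1)))⁻¹) * (Real.sqrt π + k * FA ((x - lam*(s+1)) * (Real.sqrt (2*ν*(s+1)))⁻¹))⁻¹) := by
    filter_upwards [Ioi_mem_nhds (show (-1:ℝ) < t by linarith)] with s hs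
    exact hpt x s hs
  have hT : deriv (fun s => θ x s) t = Real.sqrt ν / Real.sqrt (2*(t+1)) * k * gA ((x - lam*(t+1)) * (Real.sqrt (2*ν*(t+1)))⁻¹) * (-((Real.sqrt π + k * FA ((x - lam*(t+1)) * (Real.sqrt (2*ν*(t+1)))⁻¹)) / (2*(t+1))) + (-lam * (Real.sqrt (2*ν*(t+1)))⁻¹ - ((x - lam*(t+1)) * (Real.sqrt (2*ν*(t+1)))⁻¹) / (2*(t+1))) * ((-2) * ((x - lam*(t+1)) * (Real.sqrt (2*ν*(t+1)))⁻¹) * (Real.sqrt π + k * FA ((x - lam*(t+1)) * (Real.sqrt (2*ν*(t+1)))⁻¹)) + k * gA ((x - lam*(t+1)) * (Real.sqrt (2*ν*(t+1)))⁻¹))) / (Real.sqrt π + k * FA ((x - lam*(t+1)) * (Real.sqrt (2*ν*(t+1)))⁻¹))^2 := by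
    rw [hev.deriv_eq]
    exact (tderiv ν lam k x t hν ht (hD0x x)).deriv
  rw [hT, hd1x, hsqd, hdd]
  -- final algebraic identity
  have e1 : Real.sqrt (2*ν*(t+1)) = Real.sqrt ν * Real.sqrt (2*(t+1)) := by
    rw [show 2*ν*(t+1) = ν*(2*(t+1)) by ring, Real.sqrt_mul hν.le]
  have hD0' := hD0x x
  rw [e1] at hD0'
  simp only [e1]
  set sν := Real.sqrt ν with hsν
  set s2 := Real.sqrt (2*(t+1)) with hs2'
  have eν : ν = sν^2 := by rw [hsν, Real.sq_sqrt hν.le]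
  have e2 : 2*(t+1) = s2^2 := by rw [hs2', Real.sq_sqrt h2τ.le]
  have hsν0 : sν ≠ 0 := ne_of_gt (hsν ▸ Real.sqrt_pos.mpr hν)
  have hs20 : s2 ≠ 0 := ne_of_gt (hs2' ▸ Real.sqrt_pos.mpr h2τ)
  simp only [eν, e2]
  set w := x - lam*(t+1) with hw'
  set G := gA (w * (sν*s2)⁻¹) with hG
  set Fv := FA (w * (sν*s2)⁻¹) with hFv
  field_simp [hD0', hsν0, hs20]
  ring
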